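/- Let b > 0 and Z ~ Laplace(0,b). Define f̃(x) = 1/x for x ≥ 1 and f̃(x) = 1 − (x−1) + (x−1)² for x < 1, and let g(x) = f̃(x) − b²·f̃''(x). Then for every q ≥ 1, E[g(q+Z)] = 1/q. -/

import Mathlib

open MeasureTheory Real

/-- Density of the Laplace(0,b) distribution. -/
noncomputable def laplacePDF (b x : ℝ) : ℝ := (1 / (2 * b)) * Real.exp (-|x| / b)

/-- The extended function `f̃` (equal to `1/x` on `[1,∞)`, quadratic below 1). -/
noncomputable def fTilde (x : ℝ) : ℝ :=
  if 1 ≤ x then 1 / x else 1 - (x - 1) + (x - 1) ^ 2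

/-- Second derivative of `f̃`. -/
noncomputable def fTilde'' (x : ℝ) : ℝ := if 1 ≤ x then 2 / x ^ 3 else 2

open Set Filter Topology

noncomputable def fTilde' (x : ℝ) : ℝ := if 1 ≤ x then -(1 / x ^ 2) else -1 + 2 * (x - 1)

lemma hasDerivAt_quad (x : ℝ) :
    HasDerivAt (fun y : ℝ => 1 - (y - 1) + (y - 1) ^ 2) (-1 + 2 * (x - 1)) x := by
  have h1 : HasDerivAt (fun y : ℝ => y - 1) 1 x := (hasDerivAt_id x).sub_const 1
  have h2 : HasDerivAt (fun y : ℝ => (y - 1) ^ 2) (2 * (x - 1)) x := by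
    simpa [Pi.pow_def] using h1.pow 2
  simpa [Pi.add_def, Pi.sub_def] using ((hasDerivAt_const x (1:ℝ)).sub h1).add h2

lemma hasDerivAt_inv1 (x : ℝ) (hx : x ≠ 0) :
    HasDerivAt (fun y : ℝ => 1 / y) (-(1 / x ^ 2)) x := by
  simpa [one_div] using hasDerivAt_inv hx

lemma hasDerivAt_fTilde (x : ℝ) : HasDerivAt fTilde (fTilde' x) x := by
  rcases lt_trichotomy x 1 with h | h | h
  · have hev : fTilde =ᶠ[𝓝 x] fun y => 1 - (y - 1) + (y - 1) ^ 2 := by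
      filter_upwards [Iio_mem_nhds h] with y hy
      simp [fTilde, not_le.mpr hy.out]
    rw [fTilde', if_neg (not_le.mpr h)]
    exact (hasDerivAt_quad x).congr_of_eventuallyEq hev
  · subst h
    have hIci : HasDerivWithinAt fTilde (fTilde' 1) (Ici 1) 1 := by
      have h0 := (hasDerivAt_inv1 1 one_ne_zero).hasDerivWithinAt (s := Ici 1)
      have : fTilde' 1 = -(1 / (1:ℝ) ^ 2) := by norm_num [fTilde']
      rw [this]
      exact h0.congr (fun y hy => by simp [fTilde, hy.out]) (by simp [fTilde])
    have hIic : HasDerivWithinAt fTilde (fTilde' 1) (Iic 1) 1 := by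
      have h0 := (hasDerivAt_quad 1).hasDerivWithinAt (s := Iic 1)
      have : fTilde' 1 = -1 + 2 * ((1:ℝ) - 1) := by norm_num [fTilde']
      rw [this]
      refine h0.congr (fun y hy => ?_) (by norm_num [fTilde])
      rcases eq_or_lt_of_le hy.out with h | h
      · subst h; norm_num [fTilde]
      · simp [fTilde, not_le.mpr h]
    have := hIic.union hIci
    rwa [Iic_union_Ici, hasDerivWithinAt_univ] at this
  · have hev : fTilde =ᶠ[𝓝 x] fun y => 1 / y := by
      filter_upwards [Ioi_mem_nhds h] with y hy
      simp [fTilde, le_of_lt hy.out]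
    rw [fTilde', if_pos h.le]
    exact (hasDerivAt_inv1 x (by positivity)).congr_of_eventuallyEq hev

lemma hasDerivAt_negInvSq (x : ℝ) (hx : x ≠ 0) :
    HasDerivAt (fun y : ℝ => -(1 / y ^ 2)) (2 / x ^ 3) x := by
  have h1 : HasDerivAt (fun y : ℝ => y ^ 2) (2 * x) x := by simpa using hasDerivAt_pow 2 x
  have h2 := (h1.inv (pow_ne_zero 2 hx)).neg
  have : -(-(2 * x) / ((x ^ 2) ^ 2)) = 2 / x ^ 3 := by
    field_simp
  simpa [this, one_div, Pi.neg_def, Pi.inv_def] using h2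

lemma hasDerivAt_fTilde' (x : ℝ) : HasDerivAt fTilde' (fTilde'' x) x := by
  rcases lt_trichotomy x 1 with h | h | h
  · have hev : fTilde' =ᶠ[𝓝 x] fun y => -1 + 2 * (y - 1) := by
      filter_upwards [Iio_mem_nhds h] with y hy
      simp [fTilde', not_le.mpr hy.out]
    rw [fTilde'', if_neg (not_le.mpr h)]
    have : HasDerivAt (fun y : ℝ => -1 + 2 * (y - 1)) 2 x := by
      simpa [Pi.add_def] using (hasDerivAt_const x (-1:ℝ)).add (((hasDerivAt_id x).sub_const 1).const_mul 2)
    exact this.congr_of_eventuallyEq hev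
  · subst h
    have hIci : HasDerivWithinAt fTilde' (fTilde'' 1) (Ici 1) 1 := by
      have h0 := (hasDerivAt_negInvSq 1 one_ne_zero).hasDerivWithinAt (s := Ici 1)
      have : fTilde'' 1 = 2 / (1:ℝ) ^ 3 := by norm_num [fTilde'']
      rw [this]
      exact h0.congr (fun y hy => by simp [fTilde', hy.out]) (by norm_num [fTilde'])
    have hIic : HasDerivWithinAt fTilde' (fTilde'' 1) (Iic 1) 1 := by
      have h0' : HasDerivAt (fun y : ℝ => -1 + 2 * (y - 1)) 2 (1:ℝ) := by
        simpa [Pi.add_def] using (hasDerivAt_const (1:ℝ) (-1:ℝ)).add (((hasDerivAt_id (1:ℝ)).sub_const 1).const_mul 2)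
      have h0 := h0'.hasDerivWithinAt (s := Iic 1)
      have : fTilde'' 1 = 2 := by norm_num [fTilde'']
      rw [this]
      refine h0.congr (fun y hy => ?_) (by norm_num [fTilde'])
      rcases eq_or_lt_of_le hy.out with h | h
      · subst h; norm_num [fTilde']
      · simp [fTilde', not_le.mpr h]
    have := hIic.union hIci
    rwa [Iic_union_Ici, hasDerivWithinAt_univ] at this
  · have hev : fTilde' =ᶠ[𝓝 x] fun y => -(1 / y ^ 2) := by
      filter_upwards [Ioi_mem_nhds h] with y hy
      simp [fTilde', le_of_lt hy.out]
    rw [fTilde'', if_pos h.le]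
    exact (hasDerivAt_negInvSq x (by positivity)).congr_of_eventuallyEq hev

lemma continuous_fTilde : Continuous fTilde :=
  continuous_iff_continuousAt.mpr fun x => (hasDerivAt_fTilde x).continuousAt

lemma continuous_fTilde' : Continuous fTilde' :=
  continuous_iff_continuousAt.mpr fun x => (hasDerivAt_fTilde' x).continuousAt

lemma tendsto_pow_mul_exp_atBot (c : ℝ) (hc : 0 < c) (k : ℕ) :
    Tendsto (fun z : ℝ => z ^ k * Real.exp (c * z)) atBot (𝓝 0) := by
  have h := tendsto_pow_mul_exp_neg_atTop_nhds_zero k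
  have hcomp : Tendsto (fun z : ℝ => -(c * z)) atBot atTop := by
    apply tendsto_neg_atBot_atTop.comp
    exact (tendsto_const_mul_atBot_of_pos hc).mpr tendsto_id
  have h2 := (h.comp hcomp).const_mul (((-c) ^ k)⁻¹)
  rw [mul_zero] at h2
  refine h2.congr fun z => ?_
  have hne : (-c) ^ k ≠ 0 := pow_ne_zero _ (by simpa using hc.ne')
  have : -(c * z) = (-c) * z := by ring
  simp only [Function.comp, this, mul_pow, neg_neg]
  field_simp

lemma tendsto_quad_mul_exp_atBot (c A B C D : ℝ) (hc : 0 < c) :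
    Tendsto (fun z : ℝ => (A + B * z + C * z ^ 2) * (D * Real.exp (c * z))) atBot (𝓝 0) := by
  have h0 := (tendsto_pow_mul_exp_atBot c hc 0).const_mul (A * D)
  have h1 := (tendsto_pow_mul_exp_atBot c hc 1).const_mul (B * D)
  have h2 := (tendsto_pow_mul_exp_atBot c hc 2).const_mul (C * D)
  have := (h0.add h1).add h2
  simp only [mul_zero, add_zero] at this
  refine this.congr fun z => ?_
  ring

lemma integrableOn_exp_mul_Iic' (c a : ℝ) (hc : 0 < c) :
    IntegrableOn (fun z : ℝ => Real.exp (c * z)) (Iic a) := by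
  have A : MeasurableEmbedding (fun x : ℝ => -x) :=
    (Homeomorph.neg ℝ).isClosedEmbedding.measurableEmbedding
  have h1 : IntegrableOn (fun x : ℝ => Real.exp (-c * x)) (Ici (-a)) :=
    Iff.mpr integrableOn_Ici_iff_integrableOn_Ioi (exp_neg_integrableOn_Ioi _ hc)
  have hs : (fun x : ℝ => -x) ⁻¹' (Iic a) = Ici (-a) := by
    ext x; simp [neg_le]
  have h2 : IntegrableOn ((fun z : ℝ => Real.exp (c * z)) ∘ (fun x : ℝ => -x))
      ((fun x : ℝ => -x) ⁻¹' (Iic a)) volume := by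
    rw [hs]
    refine h1.congr_fun (fun x _ => ?_) measurableSet_Ici
    simp [Function.comp, neg_mul, mul_neg]
  have h3 := (A.integrableOn_map_iff (f := fun z : ℝ => Real.exp (c * z))
    (s := Iic a) (μ := (volume : Measure ℝ))).mpr h2
  rwa [Measure.map_neg_eq_self] at h3

lemma aux_exp_bound (t u v w : ℝ) (ht : 0 ≤ t) (hu : 0 ≤ u) (hv : 0 ≤ v) (hw : 0 ≤ w) :
    (u + v * t + w * t ^ 2) * Real.exp (-(2 * t)) ≤ (u + v + 4 * w) * Real.exp (-t) := by
  have hsq : Real.exp (t / 2) ^ 2 = Real.exp t := by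
    rw [sq, ← Real.exp_add]; ring_nf
  have h3 : (t / 2 + 1) ^ 2 ≤ Real.exp t := by
    rw [← hsq]
    have := Real.add_one_le_exp (t / 2)
    nlinarith [Real.exp_pos (t / 2)]
  have h1 : u + v * t + w * t ^ 2 ≤ (u + v + 4 * w) * Real.exp t := by
    nlinarith [Real.add_one_le_exp t, Real.exp_pos t]
  have key : (u + v * t + w * t ^ 2) * Real.exp (-(2 * t)) ≤
      ((u + v + 4 * w) * Real.exp t) * Real.exp (-(2 * t)) :=
    mul_le_mul_of_nonneg_right h1 (Real.exp_pos _).le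
  refine key.trans_eq ?_
  rw [mul_assoc, ← Real.exp_add]
  ring_nf

set_option maxHeartbeats 1000000 in
/-- The estimator `g(x) = f̃(x) - b²·f̃''(x)` is unbiased for `1/q` for all `q ≥ 1`
under Laplace(0,b) noise. -/
theorem unbiased_inverse_laplace (b : ℝ) (hb : 0 < b) :
    ∀ q : ℝ, 1 ≤ q →
      ∫ z : ℝ, (fTilde (q + z) - b ^ 2 * fTilde'' (q + z)) * laplacePDF b z = 1 / q := by
  intro q hq
  have hbne : b ≠ 0 := hb.ne'
  set φ : ℝ → ℝ := fun z => (fTilde (q + z) - b ^ 2 * fTilde'' (q + z)) * laplacePDF b z with hφ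
  set Gp : ℝ → ℝ := fun z =>
    -(b * fTilde (q + z) + b ^ 2 * fTilde' (q + z)) * ((1 / (2 * b)) * Real.exp (-(1/b) * z))
    with hGp
  set Gm : ℝ → ℝ := fun z =>
    (b * fTilde (q + z) - b ^ 2 * fTilde' (q + z)) * ((1 / (2 * b)) * Real.exp ((1/b) * z))
    with hGm
  -- basic bounds
  have habs1 : ∀ x : ℝ, 1 ≤ x → |fTilde x| ≤ 1 := by
    intro x hx
    have hx0 : 0 < x := lt_of_lt_of_le one_pos hx
    rw [fTilde, if_pos hx, abs_of_pos (by positivity), div_le_one hx0]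
    exact hx
  have habs1' : ∀ x : ℝ, 1 ≤ x → |fTilde' x| ≤ 1 := by
    intro x hx
    have hx0 : 0 < x := lt_of_lt_of_le one_pos hx
    rw [fTilde', if_pos hx, abs_neg, abs_of_pos (by positivity), div_le_one (by positivity)]
    nlinarith
  have habs2 : ∀ x : ℝ, |fTilde'' x| ≤ 2 := by
    intro x
    rw [fTilde'']
    split_ifs with hx
    · have hx0 : 0 < x := lt_of_lt_of_le one_pos hx
      rw [abs_of_pos (by positivity), div_le_iff₀ (by positivity)]
      nlinarith [mul_nonneg (sub_nonneg.2 hx) (sq_nonneg x), mul_nonneg (sub_nonneg.2 hx) hx0.le]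
    · simp
  -- measurability
  have measφ : Measurable φ := by
    have m2 : Measurable fTilde'' :=
      Measurable.ite (measurableSet_le measurable_const measurable_id)
        (measurable_const.div (measurable_id.pow_const 3)) measurable_const
    have mpdf : Measurable (laplacePDF b) :=
      (continuous_const.mul (Real.continuous_exp.comp
        ((continuous_abs.neg).div_const b))).measurable
    exact ((continuous_fTilde.measurable.comp (measurable_const.add measurable_id)).sub
      ((m2.comp (measurable_const.add measurable_id)).const_mul (b ^ 2))).mul mpdf
  have hpdf_nonneg : ∀ z : ℝ, 0 ≤ laplacePDF b z := by
    intro z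
    rw [laplacePDF]
    positivity
  -- integrability on Ioi 0
  have hboundIoi : ∀ z ∈ Ioi (0:ℝ), ‖φ z‖ ≤
      ((1 + 2 * b ^ 2) * (1 / (2 * b))) * Real.exp (-(1/b) * z) := by
    intro z hz
    have hz0 : (0:ℝ) < z := hz
    have hx : 1 ≤ q + z := by linarith
    have hpdf : laplacePDF b z = (1 / (2 * b)) * Real.exp (-(1/b) * z) := by
      rw [laplacePDF, abs_of_pos hz0]
      congr 1
      field_simp
    have h1 : |fTilde (q + z) - b ^ 2 * fTilde'' (q + z)| ≤ 1 + 2 * b ^ 2 := by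
      have := abs_sub (fTilde (q + z)) (b ^ 2 * fTilde'' (q + z))
      have h2 : |b ^ 2 * fTilde'' (q + z)| = b ^ 2 * |fTilde'' (q + z)| := by
        rw [abs_mul, abs_of_nonneg (by positivity : (0:ℝ) ≤ b ^ 2)]
      nlinarith [habs1 _ hx, habs2 (q + z), abs_nonneg (fTilde'' (q + z)), sq_nonneg b]
    rw [hφ]
    simp only [Real.norm_eq_abs]
    rw [abs_mul, abs_of_nonneg (hpdf_nonneg z), hpdf]
    calc |fTilde (q + z) - b ^ 2 * fTilde'' (q + z)| * ((1 / (2 * b)) * Real.exp (-(1/b) * z))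
        ≤ (1 + 2 * b ^ 2) * ((1 / (2 * b)) * Real.exp (-(1/b) * z)) := by
          apply mul_le_mul_of_nonneg_right h1 (by positivity)
      _ = ((1 + 2 * b ^ 2) * (1 / (2 * b))) * Real.exp (-(1/b) * z) := by ring
  have intIoi : IntegrableOn φ (Ioi (0:ℝ)) := by
    refine Integrable.mono'
      ((exp_neg_integrableOn_Ioi 0 (show (0:ℝ) < 1/b by positivity)).const_mul
        ((1 + 2 * b ^ 2) * (1 / (2 * b))))
      measφ.aestronglyMeasurable ?_
    rw [ae_restrict_iff' measurableSet_Ioi]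
    exact ae_of_all _ hboundIoi
  -- integrability on Iic 0
  have hboundIic : ∀ z ∈ Iic (0:ℝ), ‖φ z‖ ≤
      ((1 + 2 * b ^ 2 + 2 * b + 4 * (4 * b ^ 2)) * (1 / (2 * b))) *
        Real.exp ((1/(2*b)) * z) := by
    intro z hz
    have hz0 : z ≤ 0 := hz
    have hpdf : laplacePDF b z = (1 / (2 * b)) * Real.exp ((1/b) * z) := by
      rw [laplacePDF, abs_of_nonpos hz0]
      congr 1
      field_simp
    have hkey : |fTilde (q + z) - b ^ 2 * fTilde'' (q + z)| ≤
        1 + 2 * b ^ 2 + (2 * b) * (-z/(2*b)) + (4 * b ^ 2) * (-z/(2*b)) ^ 2 := by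
      have heq : (2 * b) * (-z/(2*b)) = -z := by field_simp
      have heq2 : (4 * b ^ 2) * (-z/(2*b)) ^ 2 = z ^ 2 := by
        field_simp
        ring
      rw [heq, heq2]
      by_cases hc : 1 ≤ q + z
      · have h2 : |b ^ 2 * fTilde'' (q + z)| = b ^ 2 * |fTilde'' (q + z)| := by
          rw [abs_mul, abs_of_nonneg (by positivity : (0:ℝ) ≤ b ^ 2)]
        have := abs_sub (fTilde (q + z)) (b ^ 2 * fTilde'' (q + z))
        nlinarith [habs1 _ hc, habs2 (q + z), abs_nonneg (fTilde'' (q + z)), sq_nonneg b,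
          sq_nonneg z]
      · have hlt : q + z < 1 := not_le.mp hc
        rw [fTilde, if_neg hc, fTilde'', if_neg hc]
        rw [abs_le]
        have hzneg : z < 0 := by linarith
        have hsq : (q + z - 1) ^ 2 ≤ z ^ 2 := by nlinarith
        have habs : 1 - (q + z) ≤ -z := by linarith
        constructor <;> nlinarith [sq_nonneg b, sq_nonneg z, sq_nonneg (q + z - 1)]
    have haux := aux_exp_bound (-z/(2*b)) (1 + 2 * b ^ 2) (2 * b) (4 * b ^ 2)
      (div_nonneg (neg_nonneg.2 hz0) (by positivity)) (by positivity) (by positivity)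
      (by positivity)
    rw [show -(2 * (-z/(2*b))) = (1/b) * z from by field_simp,
        show -(-z/(2*b)) = (1/(2*b)) * z from by ring] at haux
    rw [hφ]
    simp only [Real.norm_eq_abs]
    rw [abs_mul, abs_of_nonneg (hpdf_nonneg z), hpdf]
    calc |fTilde (q + z) - b ^ 2 * fTilde'' (q + z)| * ((1 / (2 * b)) * Real.exp ((1/b) * z))
        ≤ ((1 + 2 * b ^ 2 + (2 * b) * (-z/(2*b)) + (4 * b ^ 2) * (-z/(2*b)) ^ 2) *
            Real.exp ((1/b) * z)) * (1 / (2 * b)) := by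
          rw [show (1 + 2 * b ^ 2 + (2 * b) * (-z/(2*b)) + (4 * b ^ 2) * (-z/(2*b)) ^ 2) *
            Real.exp ((1/b) * z) * (1 / (2 * b)) =
            (1 + 2 * b ^ 2 + (2 * b) * (-z/(2*b)) + (4 * b ^ 2) * (-z/(2*b)) ^ 2) *
            ((1 / (2 * b)) * Real.exp ((1/b) * z)) from by ring]
          exact mul_le_mul_of_nonneg_right hkey (by positivity)
      _ ≤ ((1 + 2 * b ^ 2 + 2 * b + 4 * (4 * b ^ 2)) * Real.exp ((1/(2*b)) * z)) *
            (1 / (2 * b)) := mul_le_mul_of_nonneg_right haux (by positivity)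
      _ = ((1 + 2 * b ^ 2 + 2 * b + 4 * (4 * b ^ 2)) * (1 / (2 * b))) *
            Real.exp ((1/(2*b)) * z) := by ring
  have intIic : IntegrableOn φ (Iic (0:ℝ)) := by
    refine Integrable.mono'
      ((integrableOn_exp_mul_Iic' (1/(2*b)) 0 (by positivity)).const_mul
        ((1 + 2 * b ^ 2 + 2 * b + 4 * (4 * b ^ 2)) * (1 / (2 * b))))
      measφ.aestronglyMeasurable ?_
    rw [ae_restrict_iff' measurableSet_Iic]
    exact ae_of_all _ hboundIic
  -- derivative of Gp on Ioi 0
  have hF : ∀ z : ℝ, HasDerivAt (fun z => fTilde (q + z)) (fTilde' (q + z)) z := by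
    intro z
    have := (hasDerivAt_fTilde (q + z)).comp z ((hasDerivAt_id z).const_add q)
    simpa [Function.comp_def] using this
  have hF' : ∀ z : ℝ, HasDerivAt (fun z => fTilde' (q + z)) (fTilde'' (q + z)) z := by
    intro z
    have := (hasDerivAt_fTilde' (q + z)).comp z ((hasDerivAt_id z).const_add q)
    simpa [Function.comp_def] using this
  have hEp : ∀ z : ℝ, HasDerivAt (fun z : ℝ => Real.exp (-(1/b) * z))
      (-(1/b) * Real.exp (-(1/b) * z)) z := by
    intro z
    have := ((hasDerivAt_id z).const_mul (-(1/b))).exp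
    simpa [mul_comm] using this
  have hEm : ∀ z : ℝ, HasDerivAt (fun z : ℝ => Real.exp ((1/b) * z))
      ((1/b) * Real.exp ((1/b) * z)) z := by
    intro z
    have := ((hasDerivAt_id z).const_mul ((1/b))).exp
    simpa [mul_comm] using this
  have hGpderiv : ∀ z ∈ Ioi (0:ℝ), HasDerivAt Gp (φ z) z := by
    intro z hz
    have hz0 : (0:ℝ) < z := hz
    have hmain := (((hF z).const_mul b).add ((hF' z).const_mul (b ^ 2))).neg.mul
      ((hEp z).const_mul (1 / (2 * b)))
    refine hmain.congr_deriv ?_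
    rw [hφ]
    simp only [laplacePDF, abs_of_pos hz0, Pi.add_apply, Pi.neg_apply]
    rw [show -z/b = -(1/b) * z from by ring]
    field_simp
    ring
  have hGmderiv : ∀ z ∈ Iio (0:ℝ), HasDerivAt Gm (φ z) z := by
    intro z hz
    have hz0 : z < 0 := hz
    have hmain := (((hF z).const_mul b).sub ((hF' z).const_mul (b ^ 2))).mul
      ((hEm z).const_mul (1 / (2 * b)))
    refine hmain.congr_deriv ?_
    rw [hφ]
    simp only [laplacePDF, abs_of_neg hz0, Pi.sub_apply]
    rw [show -(-z)/b = (1/b) * z from by ring]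
    field_simp
    ring
  -- limits
  have hexp_top : Tendsto (fun z : ℝ => Real.exp (-(1/b) * z)) atTop (𝓝 0) := by
    apply Real.tendsto_exp_atBot.comp
    have h1b : (0:ℝ) < 1/b := by positivity
    exact (tendsto_const_mul_atBot_of_neg (neg_lt_zero.mpr h1b)).mpr tendsto_id
  have hGptop : Tendsto Gp atTop (𝓝 0) := by
    have h' : Tendsto (fun z : ℝ => ((b + b ^ 2) * (1 / (2 * b))) * Real.exp (-(1/b) * z))
        atTop (𝓝 0) := by
      have := hexp_top.const_mul ((b + b ^ 2) * (1 / (2 * b)))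
      simpa using this
    refine squeeze_zero_norm' ?_ h'
    · filter_upwards [Ici_mem_atTop (0:ℝ)] with z hz
      have hx : 1 ≤ q + z := by
        have : (0:ℝ) ≤ z := hz
        linarith
      rw [hGp]
      simp only [Real.norm_eq_abs, abs_mul, abs_neg]
      have h1 : |b * fTilde (q + z) + b ^ 2 * fTilde' (q + z)| ≤ b + b ^ 2 := by
        have ha := abs_add_le (b * fTilde (q + z)) (b ^ 2 * fTilde' (q + z))
        rw [abs_mul, abs_mul, abs_of_pos hb, abs_of_nonneg (by positivity : (0:ℝ) ≤ b ^ 2)] at ha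
        nlinarith [habs1 _ hx, habs1' _ hx, abs_nonneg (fTilde (q + z)),
          abs_nonneg (fTilde' (q + z)), sq_nonneg b]
      rw [abs_of_nonneg (by positivity : (0:ℝ) ≤ 1 / (2 * b)),
        abs_of_nonneg (Real.exp_pos _).le]
      calc |b * fTilde (q + z) + b ^ 2 * fTilde' (q + z)| *
            ((1 / (2 * b)) * Real.exp (-(1/b) * z))
          ≤ (b + b ^ 2) * ((1 / (2 * b)) * Real.exp (-(1/b) * z)) :=
            mul_le_mul_of_nonneg_right h1 (by positivity)
        _ = ((b + b ^ 2) * (1 / (2 * b))) * Real.exp (-(1/b) * z) := by ring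
  have hGmbot : Tendsto Gm atBot (𝓝 0) := by
    have hmain := tendsto_quad_mul_exp_atBot (1/b)
      (b * (1 - (q - 1) + (q - 1) ^ 2) - b ^ 2 * (-1 + 2 * (q - 1)))
      (b * (-1 + 2 * (q - 1)) - 2 * b ^ 2) b (1 / (2 * b)) (by positivity)
    apply hmain.congr'
    filter_upwards [Iio_mem_atBot (1 - q)] with z hz
    simp only [mem_Iio] at hz
    have hc : ¬ (1 ≤ q + z) := by
      push_neg
      linarith
    rw [hGm]
    simp only [fTilde, fTilde', if_neg hc]
    ring
  -- FTC on both half-lines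
  have c1 : Continuous fun z : ℝ => fTilde (q + z) :=
    continuous_fTilde.comp (continuous_const.add continuous_id)
  have c2 : Continuous fun z : ℝ => fTilde' (q + z) :=
    continuous_fTilde'.comp (continuous_const.add continuous_id)
  have hGpcont : Continuous Gp := by
    rw [hGp]
    exact (((continuous_const.mul c1).add (continuous_const.mul c2)).neg).mul
      (continuous_const.mul (Real.continuous_exp.comp (continuous_const.mul continuous_id)))
  have hGmcont : Continuous Gm := by
    rw [hGm]
    exact (((continuous_const.mul c1)).sub (continuous_const.mul c2)).mul
      (continuous_const.mul (Real.continuous_exp.comp (continuous_const.mul continuous_id)))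
  have Ip : ∫ z in Ioi (0:ℝ), φ z = 0 - Gp 0 :=
    integral_Ioi_of_hasDerivAt_of_tendsto hGpcont.continuousWithinAt hGpderiv intIoi hGptop
  have Im : ∫ z in Iic (0:ℝ), φ z = Gm 0 - 0 :=
    integral_Iic_of_hasDerivAt_of_tendsto hGmcont.continuousWithinAt hGmderiv intIic hGmbot
  have htot : ∫ z, φ z = (Gm 0 - 0) + (0 - Gp 0) := by
    rw [← intervalIntegral.integral_Iic_add_Ioi intIic intIoi, Im, Ip]
  rw [htot, hGm, hGp]
  simp only [add_zero, mul_zero, Real.exp_zero]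
  have hq0 : (0:ℝ) < q := lt_of_lt_of_le one_pos hq
  rw [fTilde, if_pos hq, fTilde', if_pos hq]
  field_simp
  ring
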